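/- Let p be a polynomial on ℝ² with real coefficients such that u e^p and v e^p are rapidly decreasing for polynomials u, v (more precisely: ‖t‖·(|u(t)| + |v(t)|)·e^{p(t)} → 0 as ‖t‖ → ∞ and (|u|+|v|)e^p ∈ L¹(ℝ²)). If the polynomial q := v ∂₁p − u ∂₂p + ∂₁v − ∂₂u satisfies q e^p ∈ L¹(ℝ²), then ∫_{ℝ²} q(t) e^{p(t)} dt = 0. -/

import Mathlib

open MeasureTheory Filter MvPolynomial

noncomputable def L2 (a b : ℝ) : ℝ × ℝ →L[ℝ] ℝ :=
  a • ContinuousLinearMap.fst ℝ ℝ ℝ + b • ContinuousLinearMap.snd ℝ ℝ ℝ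

lemma L2_apply (a b : ℝ) (w : ℝ × ℝ) : L2 a b w = a * w.1 + b * w.2 := by
  simp [L2, smul_eq_mul]

lemma hasFDerivAt_eval (r : MvPolynomial (Fin 2) ℝ) (z : ℝ × ℝ) :
    HasFDerivAt (fun w : ℝ × ℝ => eval ![w.1, w.2] r)
      (L2 (eval ![z.1, z.2] (pderiv 0 r)) (eval ![z.1, z.2] (pderiv 1 r))) z := by
  induction r using MvPolynomial.induction_on with
  | C a =>
      have : L2 (eval ![z.1, z.2] (pderiv 0 (C a : MvPolynomial (Fin 2) ℝ)))
          (eval ![z.1, z.2] (pderiv 1 (C a))) = 0 := by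
        refine ContinuousLinearMap.ext fun w => ?_; simp [L2, pderiv_C]
      simp only [eval_C, this]
      exact hasFDerivAt_const a z
  | add f g hf hg =>
      simp only [map_add, eval_add]
      have : L2 (eval ![z.1, z.2] (pderiv 0 f) + eval ![z.1, z.2] (pderiv 0 g))
          (eval ![z.1, z.2] (pderiv 1 f) + eval ![z.1, z.2] (pderiv 1 g)) =
          L2 (eval ![z.1, z.2] (pderiv 0 f)) (eval ![z.1, z.2] (pderiv 1 f)) +
          L2 (eval ![z.1, z.2] (pderiv 0 g)) (eval ![z.1, z.2] (pderiv 1 g)) := by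
        refine ContinuousLinearMap.ext fun w => ?_
        simp only [ContinuousLinearMap.add_apply, L2_apply]; ring
      rw [this]
      exact hf.add hg
  | mul_X f n hf =>
      have hXn : HasFDerivAt (fun w : ℝ × ℝ => eval ![w.1, w.2] (X n : MvPolynomial (Fin 2) ℝ))
          (L2 (eval ![z.1, z.2] (pderiv 0 (X n))) (eval ![z.1, z.2] (pderiv 1 (X n)))) z := by
        fin_cases n <;> simp only [Fin.zero_eta, Fin.mk_one]
        · simp only [eval_X]
          have h1 : (pderiv (0:Fin 2) (X 0 : MvPolynomial (Fin 2) ℝ)) = 1 := pderiv_X_self 0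
          have h2 : (pderiv (1:Fin 2) (X 0 : MvPolynomial (Fin 2) ℝ)) = 0 :=
            pderiv_X_of_ne (by decide)
          rw [h1, h2]
          simp only [map_one, map_zero]
          have : L2 (1:ℝ) 0 = ContinuousLinearMap.fst ℝ ℝ ℝ := by refine ContinuousLinearMap.ext fun w => ?_; simp [L2_apply]
          simp only [Matrix.cons_val_zero, this]
          exact hasFDerivAt_fst
        · simp only [eval_X]
          have h1 : (pderiv (0:Fin 2) (X 1 : MvPolynomial (Fin 2) ℝ)) = 0 :=
            pderiv_X_of_ne (by decide)
          have h2 : (pderiv (1:Fin 2) (X 1 : MvPolynomial (Fin 2) ℝ)) = 1 := pderiv_X_self 1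
          rw [h1, h2]
          simp only [map_one, map_zero]
          have : L2 (0:ℝ) 1 = ContinuousLinearMap.snd ℝ ℝ ℝ := by refine ContinuousLinearMap.ext fun w => ?_; simp [L2_apply]
          simp only [Matrix.cons_val_one, Matrix.head_cons, this]
          exact hasFDerivAt_snd
      have := hf.mul hXn
      simp only [map_mul, eval_mul] at this ⊢
      refine HasFDerivAt.congr_fderiv this ?_
      rw [pderiv_mul, pderiv_mul]
      refine ContinuousLinearMap.ext fun w => ?_
      simp only [ContinuousLinearMap.add_apply, ContinuousLinearMap.coe_smul', Pi.smul_apply,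
        L2_apply, smul_eq_mul, map_add, map_mul]
      ring

noncomputable def Dr (r : MvPolynomial (Fin 2) ℝ) (w : ℝ × ℝ) : ℝ × ℝ →L[ℝ] ℝ :=
  L2 (eval ![w.1, w.2] (pderiv 0 r)) (eval ![w.1, w.2] (pderiv 1 r))

lemma hasFDerivAt_polyExp (r p : MvPolynomial (Fin 2) ℝ) (z : ℝ × ℝ) :
    HasFDerivAt (fun w : ℝ × ℝ => eval ![w.1, w.2] r * Real.exp (eval ![w.1, w.2] p))
      (eval ![z.1, z.2] r • (Real.exp (eval ![z.1, z.2] p) • Dr p z) +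
        Real.exp (eval ![z.1, z.2] p) • Dr r z) z :=
  (hasFDerivAt_eval r z).mul ((hasFDerivAt_eval p z).exp)

lemma abs_coord_le (t : EuclideanSpace ℝ (Fin 2)) (i : Fin 2) : |t i| ≤ ‖t‖ := by
  rw [EuclideanSpace.norm_eq]
  calc |t i| = Real.sqrt (‖t i‖ ^ 2) := by
        rw [Real.sqrt_sq (norm_nonneg _), Real.norm_eq_abs]
    _ ≤ _ := Real.sqrt_le_sqrt
        (Finset.single_le_sum (fun j _ => sq_nonneg ‖t j‖) (Finset.mem_univ i))

lemma funext_fin2 (t : EuclideanSpace ℝ (Fin 2)) : (fun j => t j) = ![t 0, t 1] :=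
  funext fun j => by fin_cases j <;> rfl

/-- Stokes-type identity: if `u e^p, v e^p` decay (with their norms times `‖t‖`
    tending to `0` at infinity) and are integrable, then
    `∫_{ℝ²} (v ∂₁p − u ∂₂p + ∂₁v − ∂₂u) e^p dt = 0`. -/
theorem integral_divergence_exp_zero
    (p u v : MvPolynomial (Fin 2) ℝ)
    (hdecay : Tendsto
      (fun t : EuclideanSpace ℝ (Fin 2) =>
        ‖t‖ * ((|eval (fun j => t j) u| + |eval (fun j => t j) v|) *
          Real.exp (eval (fun j => t j) p)))
      (cocompact (EuclideanSpace ℝ (Fin 2))) (nhds 0))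
    (hint : Integrable
      (fun t : EuclideanSpace ℝ (Fin 2) =>
        (|eval (fun j => t j) u| + |eval (fun j => t j) v|) *
          Real.exp (eval (fun j => t j) p)) volume)
    (q : MvPolynomial (Fin 2) ℝ)
    (hq : q = v * pderiv 0 p - u * pderiv 1 p + pderiv 0 v - pderiv 1 u)
    (hqint : Integrable
      (fun t : EuclideanSpace ℝ (Fin 2) =>
        eval (fun j => t j) q * Real.exp (eval (fun j => t j) p)) volume) :
    ∫ t : EuclideanSpace ℝ (Fin 2),
      eval (fun j => t j) q * Real.exp (eval (fun j => t j) p) = 0 := by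
  classical
  -- the measure preserving identification with ℝ × ℝ
  set e : EuclideanSpace ℝ (Fin 2) ≃ᵐ ℝ × ℝ :=
    (MeasurableEquiv.toLp 2 (Fin 2 → ℝ)).symm.trans (MeasurableEquiv.finTwoArrow)
  have hmp : MeasurePreserving e volume volume :=
    (volume_preserving_finTwoArrow ℝ).comp
      (EuclideanSpace.volume_preserving_symm_measurableEquiv_toLp (Fin 2))
  have he : ∀ t : EuclideanSpace ℝ (Fin 2), e t = (t 0, t 1) := fun _ => rfl
  set Q : ℝ × ℝ → ℝ := fun z => eval ![z.1, z.2] q * Real.exp (eval ![z.1, z.2] p) with hQdef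
  have hcompQ : ∀ t : EuclideanSpace ℝ (Fin 2),
      eval (fun j => t j) q * Real.exp (eval (fun j => t j) p) = Q (e t) := by
    intro t; rw [funext_fin2 t]; rfl
  have hQint : Integrable Q volume := by
    rw [← hmp.integrable_comp_emb e.measurableEmbedding]
    refine hqint.congr (Eventually.of_forall fun t => ?_)
    simp only [Function.comp_apply]
    exact hcompQ t
  have hgoal : (∫ t : EuclideanSpace ℝ (Fin 2),
      eval (fun j => t j) q * Real.exp (eval (fun j => t j) p)) = ∫ z, Q z := by
    simp_rw [hcompQ]
    exact hmp.integral_comp e.measurableEmbedding Q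
  rw [hgoal]
  -- the vector field
  set f : ℝ × ℝ → ℝ := fun w => eval ![w.1, w.2] v * Real.exp (eval ![w.1, w.2] p) with hfdef
  set g : ℝ × ℝ → ℝ := fun w => -(eval ![w.1, w.2] u * Real.exp (eval ![w.1, w.2] p)) with hgdef
  set f' : ℝ × ℝ → ℝ × ℝ →L[ℝ] ℝ := fun w =>
    eval ![w.1, w.2] v • (Real.exp (eval ![w.1, w.2] p) • Dr p w) +
      Real.exp (eval ![w.1, w.2] p) • Dr v w with hf'def
  set g' : ℝ × ℝ → ℝ × ℝ →L[ℝ] ℝ := fun w =>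
    -(eval ![w.1, w.2] u • (Real.exp (eval ![w.1, w.2] p) • Dr p w) +
      Real.exp (eval ![w.1, w.2] p) • Dr u w) with hg'def
  have hdf : ∀ z : ℝ × ℝ, HasFDerivAt f (f' z) z := fun z => hasFDerivAt_polyExp v p z
  have hdg : ∀ z : ℝ × ℝ, HasFDerivAt g (g' z) z := fun z => (hasFDerivAt_polyExp u p z).neg
  have hdiv : (fun z => f' z (1, 0) + g' z (0, 1)) = Q := by
    funext z
    subst hq
    simp only [hf'def, hg'def, hQdef, ContinuousLinearMap.add_apply, ContinuousLinearMap.neg_apply,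
      ContinuousLinearMap.coe_smul', Pi.smul_apply, smul_eq_mul, Dr, L2_apply, map_sub, map_add,
      map_mul]
    ring
  have hcf : Continuous f := by
    rw [continuous_iff_continuousAt]; exact fun z => (hdf z).continuousAt
  have hcg : Continuous g := by
    rw [continuous_iff_continuousAt]; exact fun z => (hdg z).continuousAt
  -- radii
  set R : ℕ → ℝ := fun n => (n : ℝ) + 1 with hRdef
  have hRpos : ∀ n : ℕ, 0 < R n := fun n => by positivity
  -- divergence theorem on squares
  set B : ℕ → ℝ := fun n =>
    (((∫ x in -R n..R n, g (x, R n)) - ∫ x in -R n..R n, g (x, -R n)) +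
      ∫ y in -R n..R n, f (R n, y)) - ∫ y in -R n..R n, f (-R n, y) with hBdef
  have hdivthm : ∀ n : ℕ,
      (∫ z in Set.Icc ((-R n, -R n) : ℝ × ℝ) ((R n, R n) : ℝ × ℝ), Q z) = B n := by
    intro n
    have hle : ((-R n, -R n) : ℝ × ℝ) ≤ (R n, R n) := by
      constructor <;> simp <;> linarith [hRpos n]
    have := integral_divergence_prod_Icc_of_hasFDerivAt_off_countable_of_le f g f' g'
      (-R n, -R n) (R n, R n) hle ∅ Set.countable_empty hcf.continuousOn hcg.continuousOn
      (fun x _ => hdf x) (fun x _ => hdg x) (by rw [hdiv]; exact hQint.integrableOn)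
    rw [hdiv] at this
    exact this
  -- the integrals over squares tend to the full integral
  have hmono : Monotone (fun n : ℕ => Set.Icc ((-R n, -R n) : ℝ × ℝ) ((R n, R n) : ℝ × ℝ)) := by
    intro m n hmn
    apply Set.Icc_subset_Icc
    · constructor <;> · simp only [Prod.fst, Prod.snd, neg_le_neg_iff, hRdef]
                        exact add_le_add (Nat.cast_le.2 hmn) le_rfl
    · constructor <;> · simp only [hRdef]
                        exact add_le_add (Nat.cast_le.2 hmn) le_rfl
  have hunion : (⋃ n : ℕ, Set.Icc ((-R n, -R n) : ℝ × ℝ) ((R n, R n) : ℝ × ℝ)) = Set.univ := by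
    refine Set.eq_univ_of_forall fun z => Set.mem_iUnion.2 ?_
    obtain ⟨n, hn⟩ := exists_nat_ge (max (max z.1 (-z.1)) (max z.2 (-z.2)))
    refine ⟨n, ?_⟩
    have h1 : z.1 ≤ (n : ℝ) := le_trans (le_trans (le_max_left _ _) (le_max_left _ _)) hn
    have h2 : -z.1 ≤ (n : ℝ) := le_trans (le_trans (le_max_right _ _) (le_max_left _ _)) hn
    have h3 : z.2 ≤ (n : ℝ) := le_trans (le_trans (le_max_left _ _) (le_max_right _ _)) hn
    have h4 : -z.2 ≤ (n : ℝ) := le_trans (le_trans (le_max_right _ _) (le_max_right _ _)) hn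
    constructor <;> constructor <;> simp only [hRdef] <;> linarith
  have hlim1 : Tendsto (fun n : ℕ =>
      ∫ z in Set.Icc ((-R n, -R n) : ℝ × ℝ) ((R n, R n) : ℝ × ℝ), Q z) atTop (nhds (∫ z, Q z)) := by
    have := tendsto_setIntegral_of_monotone
      (fun n : ℕ => measurableSet_Icc) hmono (by rw [hunion]; exact hQint.integrableOn)
    rwa [hunion, setIntegral_univ] at this
  -- boundary terms tend to zero
  have hlim2 : Tendsto B atTop (nhds 0) := by
    rw [NormedAddCommGroup.tendsto_nhds_zero]
    intro ε hε
    have hε9 : 0 < ε / 9 := by positivity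
    -- extract decay data
    have hev : ∀ᶠ t : EuclideanSpace ℝ (Fin 2) in cocompact _,
        ‖t‖ * ((|eval (fun j => t j) u| + |eval (fun j => t j) v|) *
          Real.exp (eval (fun j => t j) p)) < ε / 9 := by
      have := Metric.tendsto_nhds.1 hdecay (ε / 9) hε9
      refine this.mono fun t ht => ?_
      rwa [Real.dist_eq, sub_zero, abs_of_nonneg (by positivity)] at ht
    obtain ⟨K, hK, hKc⟩ := (hasBasis_cocompact.eventually_iff).1 hev
    obtain ⟨M, hM⟩ := hK.isBounded.subset_closedBall 0
    set M' : ℝ := max M 0 with hM'def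
    -- key pointwise bound
    have key : ∀ z : ℝ × ℝ, ∀ r : ℝ, 0 < r → M' < r → (|z.1| ≤ r ∧ |z.2| = r) ∨
        (|z.1| = r ∧ |z.2| ≤ r) →
        (|eval ![z.1, z.2] u| + |eval ![z.1, z.2] v|) * Real.exp (eval ![z.1, z.2] p) < ε / 9 / r := by
      intro z r hr hMr hcase
      set t : EuclideanSpace ℝ (Fin 2) := (EuclideanSpace.equiv (Fin 2) ℝ).symm ![z.1, z.2] with htdef
      have ht0 : t 0 = z.1 := rfl
      have ht1 : t 1 = z.2 := rfl
      have htnorm : r ≤ ‖t‖ := by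
        rcases hcase with ⟨_, h2⟩ | ⟨h1, _⟩
        · rw [← h2, ← ht1]; exact abs_coord_le t 1
        · rw [← h1, ← ht0]; exact abs_coord_le t 0
      have htK : t ∉ K := by
        intro hmem
        have := hM hmem
        rw [Metric.mem_closedBall, dist_zero_right] at this
        have : r ≤ M := le_trans htnorm this
        have : r ≤ M' := le_trans this (le_max_left _ _)
        linarith
      have hlt := hKc htK
      rw [funext_fin2 t] at hlt
      have heq : (![t 0, t 1] : Fin 2 → ℝ) = ![z.1, z.2] := by rw [ht0, ht1]
      rw [heq] at hlt
      set H := (|eval ![z.1, z.2] u| + |eval ![z.1, z.2] v|) * Real.exp (eval ![z.1, z.2] p)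
      have hH : 0 ≤ H := by positivity
      have : r * H ≤ ‖t‖ * H := mul_le_mul_of_nonneg_right htnorm hH
      have hrH : r * H < ε / 9 := lt_of_le_of_lt this hlt
      rw [lt_div_iff₀ hr, mul_comm]
      exact hrH
    obtain ⟨N, hN⟩ := exists_nat_ge M'
    rw [eventually_atTop]
    refine ⟨N, fun n hn => ?_⟩
    have hMRn : M' < R n := by
      have : (N : ℝ) ≤ (n : ℝ) := Nat.cast_le.2 hn
      simp only [hRdef]; linarith
    have hRn := hRpos n
    -- bounds for the four boundary integrals
    have hbound : ∀ (φ : ℝ → ℝ), (∀ x ∈ Set.uIoc (-R n) (R n), ‖φ x‖ ≤ ε / 9 / R n) →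
        ‖∫ x in -R n..R n, φ x‖ ≤ 2 * (ε / 9) := by
      intro φ hφ
      have := intervalIntegral.norm_integral_le_of_norm_le_const hφ
      have habs : |R n - -(R n)| = 2 * R n := by rw [abs_of_pos (by linarith)]; ring
      rw [habs] at this
      calc ‖∫ x in -R n..R n, φ x‖ ≤ ε / 9 / R n * (2 * R n) := this
        _ = 2 * (ε / 9) := by field_simp
    have hmemIcc : ∀ x ∈ Set.uIoc (-R n) (R n), |x| ≤ R n := by
      intro x hx
      rw [Set.uIoc_of_le (by linarith)] at hx
      rw [abs_le]; exact ⟨le_of_lt hx.1, hx.2⟩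
    have hb1 : ‖∫ x in -R n..R n, g (x, R n)‖ ≤ 2 * (ε / 9) := by
      refine hbound _ fun x hx => ?_
      have hk := key (x, R n) (R n) hRn hMRn (Or.inl ⟨hmemIcc x hx, abs_of_pos hRn⟩)
      simp only [hgdef, Real.norm_eq_abs, abs_neg, abs_mul, abs_of_pos (Real.exp_pos _)]
      calc |eval ![x, R n] u| * Real.exp (eval ![x, R n] p)
          ≤ (|eval ![x, R n] u| + |eval ![x, R n] v|) * Real.exp (eval ![x, R n] p) := by
            apply mul_le_mul_of_nonneg_right _ (Real.exp_pos _).le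
            linarith [abs_nonneg (eval ![x, R n] v)]
        _ ≤ ε / 9 / R n := hk.le
    have hb2 : ‖∫ x in -R n..R n, g (x, -R n)‖ ≤ 2 * (ε / 9) := by
      refine hbound _ fun x hx => ?_
      have hk := key (x, -R n) (R n) hRn hMRn (Or.inl ⟨hmemIcc x hx, by rw [abs_neg, abs_of_pos hRn]⟩)
      simp only [hgdef, Real.norm_eq_abs, abs_neg, abs_mul, abs_of_pos (Real.exp_pos _)]
      calc |eval ![x, -R n] u| * Real.exp (eval ![x, -R n] p)
          ≤ (|eval ![x, -R n] u| + |eval ![x, -R n] v|) * Real.exp (eval ![x, -R n] p) := by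
            apply mul_le_mul_of_nonneg_right _ (Real.exp_pos _).le
            linarith [abs_nonneg (eval ![x, -R n] v)]
        _ ≤ ε / 9 / R n := hk.le
    have hb3 : ‖∫ y in -R n..R n, f (R n, y)‖ ≤ 2 * (ε / 9) := by
      refine hbound _ fun y hy => ?_
      have hk := key (R n, y) (R n) hRn hMRn (Or.inr ⟨abs_of_pos hRn, hmemIcc y hy⟩)
      simp only [hfdef, Real.norm_eq_abs, abs_mul, abs_of_pos (Real.exp_pos _)]
      calc |eval ![R n, y] v| * Real.exp (eval ![R n, y] p)
          ≤ (|eval ![R n, y] u| + |eval ![R n, y] v|) * Real.exp (eval ![R n, y] p) := by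
            apply mul_le_mul_of_nonneg_right _ (Real.exp_pos _).le
            linarith [abs_nonneg (eval ![R n, y] u)]
        _ ≤ ε / 9 / R n := hk.le
    have hb4 : ‖∫ y in -R n..R n, f (-R n, y)‖ ≤ 2 * (ε / 9) := by
      refine hbound _ fun y hy => ?_
      have hk := key (-R n, y) (R n) hRn hMRn
        (Or.inr ⟨by rw [abs_neg, abs_of_pos hRn], hmemIcc y hy⟩)
      simp only [hfdef, Real.norm_eq_abs, abs_mul, abs_of_pos (Real.exp_pos _)]
      calc |eval ![-R n, y] v| * Real.exp (eval ![-R n, y] p)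
          ≤ (|eval ![-R n, y] u| + |eval ![-R n, y] v|) * Real.exp (eval ![-R n, y] p) := by
            apply mul_le_mul_of_nonneg_right _ (Real.exp_pos _).le
            linarith [abs_nonneg (eval ![-R n, y] u)]
        _ ≤ ε / 9 / R n := hk.le
    have : ‖B n‖ ≤ 8 * (ε / 9) := by
      simp only [hBdef]
      calc ‖(((∫ x in -R n..R n, g (x, R n)) - ∫ x in -R n..R n, g (x, -R n)) +
            ∫ y in -R n..R n, f (R n, y)) - ∫ y in -R n..R n, f (-R n, y)‖
          ≤ ‖((∫ x in -R n..R n, g (x, R n)) - ∫ x in -R n..R n, g (x, -R n)) +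
            ∫ y in -R n..R n, f (R n, y)‖ + ‖∫ y in -R n..R n, f (-R n, y)‖ := norm_sub_le _ _
        _ ≤ (‖(∫ x in -R n..R n, g (x, R n)) - ∫ x in -R n..R n, g (x, -R n)‖ +
            ‖∫ y in -R n..R n, f (R n, y)‖) + ‖∫ y in -R n..R n, f (-R n, y)‖ := by
            gcongr; exact norm_add_le _ _
        _ ≤ ((‖∫ x in -R n..R n, g (x, R n)‖ + ‖∫ x in -R n..R n, g (x, -R n)‖) +
            ‖∫ y in -R n..R n, f (R n, y)‖) + ‖∫ y in -R n..R n, f (-R n, y)‖ := by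
            gcongr; exact norm_sub_le _ _
        _ ≤ ((2 * (ε / 9) + 2 * (ε / 9)) + 2 * (ε / 9)) + 2 * (ε / 9) := by
            gcongr
        _ = 8 * (ε / 9) := by ring
    calc ‖B n‖ ≤ 8 * (ε / 9) := this
      _ < ε := by linarith
  -- conclude
  have : Tendsto (fun n : ℕ =>
      ∫ z in Set.Icc ((-R n, -R n) : ℝ × ℝ) ((R n, R n) : ℝ × ℝ), Q z) atTop (nhds 0) := by
    simp only [hdivthm]
    exact hlim2
  exact tendsto_nhds_unique hlim1 this
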